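/- Let h₀ > 0 and let α₁, α₂, ε : (0, h₀) → ℝ be functions such that: (i) there exist C, c > 0 with |ε(h)| ≤ C e^{-c/h}; (ii) α₁(h) < α₂(h) for all h; (iii) ε(h)/(α₂(h)-α₁(h)) → 0 as h → 0⁺; and (iv) there exist sequences (κ₁,k)_{k≥0} and (κ₂,k)_{k≥0} of real numbers such that for every N and i ∈ {1,2}, α_i(h) = Σ_{k=0}^{N} κ_{i,k} h^k + O(h^{N+1}) as h → 0⁺. Define λ±(h) = ((α₁(h)+α₂(h)) ± sqrt((α₂(h)-α₁(h))² + 4ε(h)²))/2. Then for every N, λ₋(h) = Σ_{k=0}^{N} κ_{1,k} h^k + O(h^{N+1}) and λ₊(h) = Σ_{k=0}^{N} κ_{2,k} h^k + O(h^{N+1}) as h → 0⁺. -/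

import Mathlib

open Filter Asymptotics Topology

lemma exp_lo (c : ℝ) (hc : 0 < c) (n : ℕ) :
    (fun h : ℝ => Real.exp (-c / h)) =o[𝓝[>] (0:ℝ)] (fun h => h ^ n) := by
  have hmem : ∀ᶠ h in 𝓝[>] (0:ℝ), h ∈ Set.Ioi (0:ℝ) := self_mem_nhdsWithin
  rw [isLittleO_iff_tendsto' (by
    filter_upwards [hmem] with h hh hh0
    exact absurd hh0 (pow_ne_zero n (ne_of_gt hh)))]
  have hcomp : Tendsto (fun h : ℝ => c / h) (𝓝[>] (0:ℝ)) atTop := by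
    simpa [div_eq_mul_inv] using tendsto_inv_nhdsGT_zero.const_mul_atTop hc
  have := ((Real.tendsto_pow_mul_exp_neg_atTop_nhds_zero n).comp hcomp).const_mul ((c:ℝ)^n)⁻¹
  rw [mul_zero] at this
  refine this.congr' ?_
  filter_upwards [hmem] with h hh
  have hh' : h ≠ 0 := ne_of_gt hh
  simp only [Function.comp, div_pow, neg_div]
  rw [eq_div_iff (pow_ne_zero n hh')]
  field_simp

/-- Full asymptotic expansions of the eigenvalues in the case `∂C₁ ∩ ∂C₂ = ∅`:
if `ε` is exponentially small, `α₁ < α₂`, `ε/(α₂-α₁) → 0`, and `α₁, α₂` admit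
full asymptotic expansions in `h` with coefficients `κ₁, κ₂`, then the
eigenvalues `λ± = ((α₁+α₂) ± sqrt((α₂-α₁)² + 4ε²))/2` admit the full
asymptotic expansions with coefficients `κ₁` and `κ₂` respectively. -/
theorem stmt10 (h₀ : ℝ) (hh₀ : 0 < h₀) (α₁ α₂ ε : ℝ → ℝ)
    (h1 : ∃ C > 0, ∃ c > 0, ∀ h ∈ Set.Ioo 0 h₀, |ε h| ≤ C * Real.exp (-c / h))
    (h2 : ∀ h ∈ Set.Ioo 0 h₀, α₁ h < α₂ h)
    (h3 : Tendsto (fun h => ε h / (α₂ h - α₁ h)) (𝓝[>] (0:ℝ)) (𝓝 0))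
    (κ₁ κ₂ : ℕ → ℝ)
    (h4 : ∀ N : ℕ,
      (fun h => α₁ h - ∑ k ∈ Finset.range (N + 1), κ₁ k * h ^ k)
        =O[𝓝[>] (0:ℝ)] (fun h => h ^ (N + 1)))
    (h5 : ∀ N : ℕ,
      (fun h => α₂ h - ∑ k ∈ Finset.range (N + 1), κ₂ k * h ^ k)
        =O[𝓝[>] (0:ℝ)] (fun h => h ^ (N + 1))) :
    ∀ N : ℕ,
      (fun h => ((α₁ h + α₂ h) - Real.sqrt ((α₂ h - α₁ h) ^ 2 + 4 * ε h ^ 2)) / 2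
          - ∑ k ∈ Finset.range (N + 1), κ₁ k * h ^ k)
        =O[𝓝[>] (0:ℝ)] (fun h => h ^ (N + 1)) ∧
      (fun h => ((α₁ h + α₂ h) + Real.sqrt ((α₂ h - α₁ h) ^ 2 + 4 * ε h ^ 2)) / 2
          - ∑ k ∈ Finset.range (N + 1), κ₂ k * h ^ k)
        =O[𝓝[>] (0:ℝ)] (fun h => h ^ (N + 1)) := by
  intro N
  obtain ⟨C, hC, c, hc, hbd⟩ := h1
  have hIoo : Set.Ioo (0:ℝ) h₀ ∈ 𝓝[>] (0:ℝ) :=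
    Ioo_mem_nhdsGT_of_mem (Set.left_mem_Ico.mpr hh₀)
  -- ε is O(h^(N+1))
  have hε : ε =O[𝓝[>] (0:ℝ)] (fun h => h ^ (N + 1)) := by
    refine IsBigO.trans ?_ (exp_lo c hc (N + 1)).isBigO
    rw [isBigO_iff]
    refine ⟨C, ?_⟩
    filter_upwards [hIoo] with h hh
    calc ‖ε h‖ = |ε h| := rfl
    _ ≤ C * Real.exp (-c / h) := hbd h hh
    _ ≤ C * ‖Real.exp (-c / h)‖ := by rw [Real.norm_eq_abs, abs_of_pos (Real.exp_pos _)]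
  -- sqrt term minus (α₂ - α₁) is O(ε)
  have hSD : (fun h => Real.sqrt ((α₂ h - α₁ h) ^ 2 + 4 * ε h ^ 2) - (α₂ h - α₁ h))
      =O[𝓝[>] (0:ℝ)] ε := by
    rw [isBigO_iff]
    refine ⟨2, ?_⟩
    filter_upwards [hIoo] with h hh
    have hD : 0 < α₂ h - α₁ h := sub_pos.mpr (h2 h hh)
    set D := α₂ h - α₁ h
    have h1' : D ≤ Real.sqrt (D ^ 2 + 4 * ε h ^ 2) := by
      have := Real.sqrt_le_sqrt (show D ^ 2 ≤ D ^ 2 + 4 * ε h ^ 2 by nlinarith [sq_nonneg (ε h)])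
      rwa [Real.sqrt_sq hD.le] at this
    have h2' : Real.sqrt (D ^ 2 + 4 * ε h ^ 2) ≤ D + 2 * |ε h| := by
      have hnn : (0:ℝ) ≤ D + 2 * |ε h| := by linarith [abs_nonneg (ε h)]
      have := Real.sqrt_le_sqrt (show D ^ 2 + 4 * ε h ^ 2 ≤ (D + 2 * |ε h|) ^ 2 by
        nlinarith [sq_abs (ε h), abs_nonneg (ε h), hD.le])
      rwa [Real.sqrt_sq hnn] at this
    rw [Real.norm_eq_abs, Real.norm_eq_abs, abs_of_nonneg (by linarith)]
    linarith
  have hSD' : (fun h => Real.sqrt ((α₂ h - α₁ h) ^ 2 + 4 * ε h ^ 2) - (α₂ h - α₁ h))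
      =O[𝓝[>] (0:ℝ)] (fun h => h ^ (N + 1)) := hSD.trans hε
  constructor
  · have := (h4 N).sub (hSD'.const_mul_left (1/2))
    refine this.congr' ?_ (EventuallyEq.refl _ _)
    filter_upwards with h
    ring
  · have := (h5 N).add (hSD'.const_mul_left (1/2))
    refine this.congr' ?_ (EventuallyEq.refl _ _)
    filter_upwards with h
    ring
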